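/- If v : ℝ → ℝ is continuously differentiable on (0,∞) with v′ nonincreasing on (0,∞), v′(b*) = 1 for some b* > 0, and 0 ≤ v′ ≤ β on (0,∞), then for every x ≥ 0: max over l ∈ [0,x] of (l + v(x−l) − v(x)) equals 0 if x ∈ [0, b*], and equals x − b* + v(b*) − v(x) if x > b*. -/

import Mathlib

open Set

/-- The maximizer of l ↦ l + v(x−l) − v(x) over [0,x]: 0 if x ≤ b*,
    and l = x − b* if x > b*. -/
theorem max_dividend_payment
    (β bstar : ℝ) (hβ : 1 < β) (hbstar : 0 < bstar)
    (v v' : ℝ → ℝ)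
    (hcont : ContinuousOn v (Set.Ici 0))
    (hderiv : ∀ x > 0, HasDerivAt v (v' x) x)
    (hderiv_cont : ContinuousOn v' (Set.Ioi 0))
    (hanti : AntitoneOn v' (Set.Ioi 0))
    (hslope : v' bstar = 1)
    (hbounds : ∀ x > 0, 0 ≤ v' x ∧ v' x ≤ β) :
    ∀ x ≥ 0,
      (x ≤ bstar →
        IsGreatest ((fun l => l + v (x - l) - v x) '' Set.Icc 0 x) 0) ∧
      (bstar < x →
        IsGreatest ((fun l => l + v (x - l) - v x) '' Set.Icc 0 x)
          (x - bstar + v bstar - v x)) := by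
  set w : ℝ → ℝ := fun y => v y - y with hw
  have hwderiv : ∀ y > 0, HasDerivAt w (v' y - 1) y := fun y hy =>
    (hderiv y hy).sub (hasDerivAt_id y)
  have hwcont : ContinuousOn w (Set.Ici 0) :=
    hcont.sub continuousOn_id
  -- w monotone on [0, bstar]
  have hmono : MonotoneOn w (Set.Icc 0 bstar) := by
    apply monotoneOn_of_deriv_nonneg (convex_Icc 0 bstar)
      (hwcont.mono (Icc_subset_Ici_self))
    · intro y hy
      rw [interior_Icc] at hy
      exact (hwderiv y hy.1).differentiableAt.differentiableWithinAt
    · intro y hy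
      rw [interior_Icc] at hy
      rw [(hwderiv y hy.1).deriv]
      have : v' bstar ≤ v' y := hanti hy.1 hbstar hy.2.le
      rw [hslope] at this
      linarith
  -- w antitone on [bstar, ∞)
  have hantiw : AntitoneOn w (Set.Ici bstar) := by
    apply antitoneOn_of_deriv_nonpos (convex_Ici bstar)
      (hwcont.mono (fun y hy => le_trans hbstar.le hy))
    · intro y hy
      rw [interior_Ici] at hy
      exact (hwderiv y (lt_trans hbstar hy)).differentiableAt.differentiableWithinAt
    · intro y hy
      rw [interior_Ici] at hy
      rw [(hwderiv y (lt_trans hbstar hy)).deriv]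
      have : v' y ≤ v' bstar := hanti hbstar (lt_trans hbstar hy) hy.le
      rw [hslope] at this
      linarith
  intro x hx
  have key : ∀ l ∈ Set.Icc (0:ℝ) x, l + v (x - l) - v x = w (x - l) - w x := by
    intro l hl
    simp only [hw]
    ring
  constructor
  · intro hxb
    constructor
    · exact ⟨0, ⟨le_refl 0, hx⟩, by simp⟩
    · rintro z ⟨l, hl, rfl⟩
      show l + v (x - l) - v x ≤ 0
      rw [key l hl]
      have hy : x - l ∈ Set.Icc (0:ℝ) bstar := ⟨by linarith [hl.2], by linarith [hl.1]⟩
      have hxm : x ∈ Set.Icc (0:ℝ) bstar := ⟨hx, hxb⟩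
      have := hmono hy hxm (by linarith [hl.1])
      linarith
  · intro hbx
    constructor
    · refine ⟨x - bstar, ⟨by linarith, by linarith⟩, ?_⟩
      simp only [sub_sub_cancel]
    · rintro z ⟨l, hl, rfl⟩
      show l + v (x - l) - v x ≤ x - bstar + v bstar - v x
      rw [key l hl]
      have hgoal : w (x - l) ≤ w bstar := by
        rcases le_total (x - l) bstar with h | h
        · exact hmono ⟨by linarith [hl.2], h⟩ ⟨hbstar.le, le_refl _⟩ h
        · exact hantiw (Set.mem_Ici.mpr (le_refl _)) h h
      have hwx : w x ≤ w bstar := hantiw (Set.mem_Ici.mpr (le_refl _)) hbx.le hbx.le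
      simp only [hw] at hgoal ⊢
      linarith
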